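/- arXiv:1110.6630 — 2 statements merged into one kernel-verified Lean document; each statement's English description precedes it below -/
import Mathlib

section
/- In a geodesic δ-hyperbolic space, let σ be a geodesic segment, a a point not on σ, and c an orthogonal projection of a on σ. Let b be any point of σ, and let d be an orthogonal projection of b onto the geodesic segment ac. Then |c - d| ≤ 2δ. -/
open Metric Set

/-- `s` is a geodesic segment from `x` to `y`. -/
def IsGeodSeg {X : Type*} [MetricSpace X] (x y : X) (s : Set X) : Prop :=
  ∃ f : ℝ → X, f 0 = x ∧ f (dist x y) = y ∧
    (∀ a ∈ Icc (0:ℝ) (dist x y), ∀ b ∈ Icc (0:ℝ) (dist x y), dist (f a) (f b) = |a - b|) ∧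
    s = f '' Icc (0:ℝ) (dist x y)

lemma geod_dist_add {X : Type*} [MetricSpace X] {a c : X} {τ : Set X}
    (hτ : IsGeodSeg a c τ) {d : X} (hd : d ∈ τ) :
    dist a d + dist d c = dist a c := by
  obtain ⟨f, h0, hL, hiso, hs⟩ := hτ
  rw [hs] at hd
  obtain ⟨r, hr, rfl⟩ := hd
  have h1 : dist a (f r) = r := by
    rw [← h0, hiso 0 ⟨le_refl 0, dist_nonneg⟩ r hr]
    rw [zero_sub, abs_neg, abs_of_nonneg hr.1]
  have h2 : dist (f r) c = dist a c - r := by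
    have := hiso r hr (dist a c) ⟨dist_nonneg, le_refl _⟩
    rw [hL] at this
    rw [this, abs_of_nonpos (by linarith [hr.2]), neg_sub]
  linarith

lemma geod_param {X : Type*} [MetricSpace X] {a b : X} {s : Set X}
    (h : IsGeodSeg a b s) {t : ℝ} (ht : t ∈ Icc 0 (dist a b)) :
    ∃ p ∈ s, dist a p = t ∧ dist p b = dist a b - t := by
  obtain ⟨f, h0, hL, hiso, hs⟩ := h
  refine ⟨f t, by rw [hs]; exact mem_image_of_mem f ht, ?_, ?_⟩
  · rw [← h0, hiso 0 ⟨le_refl 0, dist_nonneg⟩ t ht]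
    rw [zero_sub, abs_neg, abs_of_nonneg ht.1]
  · have := hiso t ht (dist a b) ⟨dist_nonneg, le_refl _⟩
    rw [hL] at this
    rw [this, abs_of_nonpos (by linarith [ht.2]), neg_sub]

lemma geod_subseg {X : Type*} [MetricSpace X] {x y : X} {σ : Set X}
    (hσ : IsGeodSeg x y σ) {b c : X} (hb : b ∈ σ) (hc : c ∈ σ) :
    ∃ s, IsGeodSeg b c s ∧ s ⊆ σ := by
  obtain ⟨f, h0, hL, hiso, hs⟩ := hσ
  rw [hs] at hb hc
  obtain ⟨p, hp, rfl⟩ := hb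
  obtain ⟨q, hq, rfl⟩ := hc
  have hd : dist (f p) (f q) = |p - q| := hiso p hp q hq
  rcases le_total p q with hpq | hpq
  · have hD : dist (f p) (f q) = q - p := by rw [hd, abs_of_nonpos (by linarith), neg_sub]
    refine ⟨(fun s => f (p + s)) '' Icc 0 (dist (f p) (f q)),
      ⟨fun s => f (p + s), by simp, by rw [hD]; ring_nf, ?_, rfl⟩, ?_⟩
    · intro a' ha' b' hb'
      rw [hD] at ha' hb'
      have : dist (f (p + a')) (f (p + b')) = |(p + a') - (p + b')| := by
        apply hiso <;> constructor <;> [linarith [ha'.1, hp.1]; linarith [ha'.2, hq.2];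
          linarith [hb'.1, hp.1]; linarith [hb'.2, hq.2]]
      rw [this]; ring_nf
    · rintro _ ⟨s, hs', rfl⟩
      rw [hs]
      exact mem_image_of_mem f ⟨by linarith [hs'.1, hp.1], by linarith [hs'.2, hq.2, hD ▸ hs'.2]⟩
  · have hD : dist (f p) (f q) = p - q := by rw [hd, abs_of_nonneg (by linarith)]
    refine ⟨(fun s => f (p - s)) '' Icc 0 (dist (f p) (f q)),
      ⟨fun s => f (p - s), by simp, by rw [hD]; ring_nf, ?_, rfl⟩, ?_⟩
    · intro a' ha' b' hb'
      rw [hD] at ha' hb'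
      have : dist (f (p - a')) (f (p - b')) = |(p - a') - (p - b')| := by
        apply hiso <;> constructor <;> [linarith [ha'.2, hq.1]; linarith [ha'.1, hp.2];
          linarith [hb'.2, hq.1]; linarith [hb'.1, hp.2]]
      rw [this, abs_sub_comm]; ring_nf
    · rintro _ ⟨s, hs', rfl⟩
      rw [hs]
      exact mem_image_of_mem f ⟨by linarith [hs'.2, hq.1], by linarith [hs'.1, hp.2]⟩

/-- A geodesic metric space: any two points are joined by a geodesic segment. -/
def GeodesicSpace (X : Type*) [MetricSpace X] : Prop :=
  ∀ x y : X, ∃ s : Set X, IsGeodSeg x y s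

/-- δ-hyperbolicity via δ-thin geodesic triangles. -/
def ThinTriangles (X : Type*) [MetricSpace X] (δ : ℝ) : Prop :=
  ∀ (x y z : X) (sxy syz sxz : Set X),
    IsGeodSeg x y sxy → IsGeodSeg y z syz → IsGeodSeg x z sxz →
    ∀ p ∈ sxy, infDist p (syz ∪ sxz) ≤ δ

theorem lemma3_projection_back {X : Type*} [MetricSpace X] (δ : ℝ) (hδ : 0 ≤ δ)
    (hgeo : GeodesicSpace X) (hthin : ThinTriangles X δ)
    (x y a b c d : X) (σ τ : Set X)
    (hσ : IsGeodSeg x y σ) (haσ : a ∉ σ)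
    (hc : c ∈ σ) (hcP : dist a c = infDist a σ)
    (hb : b ∈ σ)
    (hτ : IsGeodSeg a c τ)
    (hd : d ∈ τ) (hdP : dist b d = infDist b τ) :
    dist c d ≤ 2 * δ := by
  by_contra hcon
  push_neg at hcon
  have hadd : dist a d + dist d c = dist a c := geod_dist_add hτ hd
  have hcd : dist c d = dist a c - dist a d := by
    rw [dist_comm]; linarith
  -- abbreviations via linarith facts
  have htL : dist a d ≤ dist a c := by
    have := dist_nonneg (x := d) (y := c); linarith
  have hLD : dist a c ≤ dist a b := by
    rw [hcP]; exact infDist_le_dist_of_mem hb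
  obtain ⟨sab, hab⟩ := hgeo a b
  obtain ⟨sbc, hbc, hbcσ⟩ := geod_subseg hσ hb hc
  have hsmem : (dist a d + dist a c) / 2 ∈ Icc (0:ℝ) (dist a b) :=
    ⟨by positivity, by linarith⟩
  obtain ⟨p, hp, hap, hpb⟩ := geod_param hab hsmem
  have hthin' := hthin a b c sab sbc τ hab hbc hτ p hp
  have hη : 0 < (dist a c - dist a d) / 2 - δ := by linarith
  have hlt : infDist p (sbc ∪ τ) < δ + ((dist a c - dist a d) / 2 - δ) / 2 := by
    linarith
  obtain ⟨e, he, hpe⟩ := (infDist_lt_iff ⟨d, Or.inr hd⟩).mp hlt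
  have htri : dist a e ≤ dist a p + dist p e := dist_triangle a p e
  rcases he with he | he
  · have h1 : dist a c ≤ dist a e := by
      rw [hcP]; exact infDist_le_dist_of_mem (hbcσ he)
    linarith
  · have h1 : dist b d ≤ dist b e := by
      rw [hdP]; exact infDist_le_dist_of_mem he
    have h2 : dist b e ≤ dist b p + dist p e := dist_triangle b p e
    have h3 : dist a b ≤ dist a d + dist b d := by
      have := dist_triangle a d b; rw [dist_comm d b] at this; linarith
    have h4 : dist b p = dist p b := dist_comm b p
    linarith
end

section
/- In a geodesic δ-hyperbolic space, let abc be a geodesic triangle and d ≥ 0. Then the set S of points x on side ab satisfying d(x, bc) ≤ d and d(x, ac) ≤ d has diameter at most C(d + δ) for some universal constant C (one may take C = 48; concretely, any two points x, y ∈ S satisfy |x - y| ≤ 24δ + d + (distance between projections) ≤ C(d+δ)). -/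
open Metric Set

/-- A point on a geodesic segment lies metrically between the endpoints. -/
lemma geod_between {X : Type*} [MetricSpace X] {x y : X} {s : Set X}
    (h : IsGeodSeg x y s) {p : X} (hp : p ∈ s) : dist x p + dist p y = dist x y := by
  obtain ⟨f, h0, hL, hiso, hs⟩ := h
  rw [hs] at hp
  obtain ⟨r, hr, hfr⟩ := hp
  have h1 : dist x p = r := by
    have : dist x p = dist (f 0) (f r) := by rw [h0, hfr]
    rw [this, hiso 0 ⟨le_refl _, dist_nonneg⟩ r hr,
      abs_of_nonpos (by linarith [hr.1])]; ring
  have h2 : dist p y = dist x y - r := by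
    have : dist p y = dist (f r) (f (dist x y)) := by rw [hfr, hL]
    rw [this, hiso r hr (dist x y) ⟨dist_nonneg, le_refl _⟩,
      abs_of_nonpos (by linarith [hr.2])]; ring
  rw [h1, h2]; ring

lemma geod_compact {X : Type*} [MetricSpace X] {x y : X} {s : Set X}
    (h : IsGeodSeg x y s) : IsCompact s := by
  obtain ⟨f, h0, hL, hiso, hs⟩ := h
  rw [hs]
  apply isCompact_Icc.image_of_continuousOn
  have : LipschitzOnWith 1 f (Icc (0:ℝ) (dist x y)) := by
    intro u hu v hv
    simp [edist_dist, hiso u hu v hv, Real.dist_eq]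
  exact this.continuousOn

lemma geod_nonempty {X : Type*} [MetricSpace X] {x y : X} {s : Set X}
    (h : IsGeodSeg x y s) : s.Nonempty := by
  obtain ⟨f, h0, hL, hiso, hs⟩ := h
  exact ⟨x, hs ▸ ⟨0, ⟨le_refl _, dist_nonneg⟩, h0⟩⟩

/-- The key estimate: a point on `ab` within `d` of both `bc` and `ac` is at distance
within `d` of the Gromov product `(b,c)_a` from `a`. -/
lemma gromov_pinch {X : Type*} [MetricSpace X] {a b c : X} {sab sbc sac : Set X}
    (hab : IsGeodSeg a b sab) (hbc : IsGeodSeg b c sbc) (hac : IsGeodSeg a c sac)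
    {d : ℝ} {p : X} (hp : p ∈ sab)
    (h1 : infDist p sbc ≤ d) (h2 : infDist p sac ≤ d) :
    |dist a p - (dist a b + dist a c - dist b c) / 2| ≤ d := by
  obtain ⟨u, hu, hpu⟩ := (geod_compact hbc).exists_infDist_eq_dist (geod_nonempty hbc) p
  obtain ⟨v, hv, hpv⟩ := (geod_compact hac).exists_infDist_eq_dist (geod_nonempty hac) p
  rw [hpu] at h1; rw [hpv] at h2
  have hB := geod_between hab hp
  have hU := geod_between hbc hu
  have hV := geod_between hac hv
  have t1 : dist a c ≤ dist a p + dist p u + dist u c :=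
    (dist_triangle4 a p u c)
  have t2 : dist b p ≤ dist b u + dist u p := dist_triangle b u p
  have t3 : dist b c ≤ dist b p + dist p v + dist v c := dist_triangle4 b p v c
  have t4 : dist a p ≤ dist a v + dist v p := dist_triangle a v p
  have e3 : dist v p = dist p v := dist_comm v p
  have e1 : dist u p = dist p u := dist_comm u p
  have e2 : dist b p = dist p b := dist_comm b p
  rw [abs_le]
  constructor <;> nlinarith [h1, h2]

theorem lemma6_diameter_of_close_set {X : Type*} [MetricSpace X] (δ : ℝ) (hδ : 0 ≤ δ)
    (hgeo : GeodesicSpace X) (hthin : ThinTriangles X δ)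
    (a b c : X) (sab sbc sac : Set X) (d : ℝ) (hd : 0 ≤ d)
    (hab : IsGeodSeg a b sab) (hbc : IsGeodSeg b c sbc) (hac : IsGeodSeg a c sac) :
    ∀ p ∈ sab, ∀ q ∈ sab,
      infDist p sbc ≤ d → infDist p sac ≤ d →
      infDist q sbc ≤ d → infDist q sac ≤ d →
      dist p q ≤ 48 * (d + δ) := by
  intro p hp q hq hp1 hp2 hq1 hq2
  have Hp := gromov_pinch hab hbc hac hp hp1 hp2
  have Hq := gromov_pinch hab hbc hac hq hq1 hq2
  -- dist p q = |dist a p - dist a q| via the geodesic parametrization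
  obtain ⟨f, h0, hL, hiso, hs⟩ := hab
  rw [hs] at hp hq
  obtain ⟨s, hsmem, hfs⟩ := hp
  obtain ⟨t, htmem, hft⟩ := hq
  have hap : dist a p = s := by
    rw [← h0, ← hfs, hiso 0 ⟨le_refl _, dist_nonneg⟩ s hsmem,
      abs_of_nonpos (by linarith [hsmem.1])]; ring
  have haq : dist a q = t := by
    rw [← h0, ← hft, hiso 0 ⟨le_refl _, dist_nonneg⟩ t htmem,
      abs_of_nonpos (by linarith [htmem.1])]; ring
  have hpq : dist p q = |s - t| := by
    rw [← hfs, ← hft, hiso s hsmem t htmem]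
  rw [hap] at Hp; rw [haq] at Hq
  rw [hpq]
  rw [abs_le] at Hp Hq
  rw [abs_sub_le_iff]
  constructor <;> nlinarith
end
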